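/- The Choi–Lam sextic S(x,y,z) = x⁴y² + y⁴z² + z⁴x² − 3x²y²z² is nonnegative on ℝ³, and its zero set is exactly {(x,y,z) : x(y²−z²) = 0, y(z²−x²) = 0, z(x²−y²) = 0}. -/
import Mathlib

private lemma choiLam_nonneg (x y z : ℝ) :
    0 ≤ x ^ 4 * y ^ 2 + y ^ 4 * z ^ 2 + z ^ 4 * x ^ 2 - 3 * x ^ 2 * y ^ 2 * z ^ 2 := by
  nlinarith [sq_nonneg (x^2*y - y*z^2), sq_nonneg (y^2*z - z*x^2), sq_nonneg (z^2*x - x*y^2),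
    sq_nonneg (x*y*z), sq_nonneg (x^2*y + y*z^2 - 2*x*y*z), sq_nonneg (y^2*z + z*x^2 - 2*x*y*z),
    sq_nonneg (z^2*x + x*y^2 - 2*x*y*z)]

private lemma choiLam_key (x y z : ℝ)
    (h : x ^ 4 * y ^ 2 + y ^ 4 * z ^ 2 + z ^ 4 * x ^ 2 - 3 * x ^ 2 * y ^ 2 * z ^ 2 = 0) :
    x^2*y^2*z^2*(x^2-y^2)^2 ≤ 0 := by
  nlinarith [sq_nonneg (x^2*y - y*z^2), sq_nonneg (y^2*z - z*x^2), sq_nonneg (z^2*x - x*y^2),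
    sq_nonneg (x*y*z), sq_nonneg (x^2*y + y*z^2 - 2*x*y*z), sq_nonneg (y^2*z + z*x^2 - 2*x*y*z),
    sq_nonneg (z^2*x + x*y^2 - 2*x*y*z), sq_nonneg x, sq_nonneg y, sq_nonneg z,
    sq_nonneg (x*y), sq_nonneg (y*z), sq_nonneg (z*x)]

/-- The Choi–Lam sextic `S(x,y,z) = x⁴y² + y⁴z² + z⁴x² − 3x²y²z²` is nonnegative on `ℝ³`,
and its zero set is exactly `{(x,y,z) : x(y²−z²) = 0, y(z²−x²) = 0, z(x²−y²) = 0}`. -/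
theorem stmt18 (x y z : ℝ) :
    0 ≤ x ^ 4 * y ^ 2 + y ^ 4 * z ^ 2 + z ^ 4 * x ^ 2 - 3 * x ^ 2 * y ^ 2 * z ^ 2
    ∧ (x ^ 4 * y ^ 2 + y ^ 4 * z ^ 2 + z ^ 4 * x ^ 2 - 3 * x ^ 2 * y ^ 2 * z ^ 2 = 0
        ↔ x * (y ^ 2 - z ^ 2) = 0 ∧ y * (z ^ 2 - x ^ 2) = 0 ∧ z * (x ^ 2 - y ^ 2) = 0) := by
  refine ⟨choiLam_nonneg x y z, ?_, ?_⟩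
  · intro h
    by_cases hx : x = 0
    · subst hx
      have hyz : y ^ 4 * z ^ 2 = 0 := by linarith [h]; 
      rcases mul_eq_zero.mp hyz with hy | hz
      · have hy : y = 0 := by
          have := pow_eq_zero_iff (n := 4) (by norm_num) |>.mp hy
          exact this
        subst hy; norm_num
      · have hz : z = 0 := by
          have := pow_eq_zero_iff (n := 2) (by norm_num) |>.mp hz
          exact this
        subst hz; norm_num
    · by_cases hy : y = 0
      · subst hy
        have hzx : z ^ 4 * x ^ 2 = 0 := by linarith [h]
        rcases mul_eq_zero.mp hzx with hz | hx2
        · have hz : z = 0 := pow_eq_zero_iff (n := 4) (by norm_num) |>.mp hz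
          subst hz; norm_num
        · exact absurd (pow_eq_zero_iff (n := 2) (by norm_num) |>.mp hx2) hx
      · by_cases hz : z = 0
        · subst hz
          have hxy : x ^ 4 * y ^ 2 = 0 := by linarith [h]
          rcases mul_eq_zero.mp hxy with hx2 | hy2
          · exact absurd (pow_eq_zero_iff (n := 4) (by norm_num) |>.mp hx2) hx
          · exact absurd (pow_eq_zero_iff (n := 2) (by norm_num) |>.mp hy2) hy
        · -- all nonzero: show x² = y² and y² = z²
          have hx2 : (0:ℝ) < x^2 := by positivity
          have hy2 : (0:ℝ) < y^2 := by positivity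
          have hz2 : (0:ℝ) < z^2 := by positivity
          have k1 := choiLam_key x y z h
          have k2 := choiLam_key y z x (by linarith [h])
          have e1 : x^2 = y^2 := by
            have : (x^2 - y^2)^2 ≤ 0 := by
              have hpos : (0:ℝ) < x^2*y^2*z^2 := by positivity
              nlinarith [sq_nonneg (x^2 - y^2)]
            nlinarith [sq_nonneg (x^2 - y^2)]
          have e2 : y^2 = z^2 := by
            have : (y^2 - z^2)^2 ≤ 0 := by
              have hpos : (0:ℝ) < x^2*y^2*z^2 := by positivity
              nlinarith [sq_nonneg (y^2 - z^2)]
            nlinarith [sq_nonneg (y^2 - z^2)]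
          refine ⟨?_, ?_, ?_⟩
          · rw [show y^2 - z^2 = 0 by linarith]; ring
          · rw [show z^2 - x^2 = 0 by linarith]; ring
          · rw [show x^2 - y^2 = 0 by linarith]; ring
  · rintro ⟨h1, h2, h3⟩
    have q1 : (x * (y ^ 2 - z ^ 2)) ^ 2 = 0 := by rw [h1]; norm_num
    have q2 : (y * (z ^ 2 - x ^ 2)) ^ 2 = 0 := by rw [h2]; norm_num
    have q3 : (z * (x ^ 2 - y ^ 2)) ^ 2 = 0 := by rw [h3]; norm_num
    have n1 := choiLam_nonneg x y z
    have n2 := choiLam_nonneg x z y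
    nlinarith [q1, q2, q3, n1, n2]
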